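/- The staircase encoding is injective on 132-avoiding permutations: if two 132-avoiding permutations have the same number of left-to-right minima and the same number of points in each box of their staircase grids, then they are equal. -/

import Mathlib

open Finset

/-- `π i` is a left-to-right minimum of `π`. -/
def IsLRMin {n : ℕ} (π : Equiv.Perm (Fin n)) (i : Fin n) : Prop :=
  ∀ j, j < i → π i < π j

/-- `π` avoids the pattern 132. -/
def Avoids132 {n : ℕ} (π : Equiv.Perm (Fin n)) : Prop :=
  ¬ ∃ i j k : Fin n, i < j ∧ j < k ∧ π i < π k ∧ π k < π j

/-- The staircase encoding of `π`: the number of non-left-to-right-minimum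
points lying in box `(r,c)` of the staircase grid, where the row `r` of a
point is one more than the number of left-to-right minima above its value and
the column `c` is the number of left-to-right minima strictly to its left. -/
noncomputable def StaircaseEnc {n : ℕ} (π : Equiv.Perm (Fin n)) (r c : ℕ) : ℕ :=
  Nat.card {i : Fin n // ¬ IsLRMin π i ∧
    Nat.card {m : Fin n // IsLRMin π m ∧ π i < π m} + 1 = r ∧
    Nat.card {m : Fin n // IsLRMin π m ∧ m < i} = c}

namespace Staircase

variable {n : ℕ}

instance (τ : Equiv.Perm (Fin n)) : DecidablePred (IsLRMin τ) :=
  fun i => decidable_of_iff (∀ j, j < i → τ i < τ j) Iff.rfl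

lemma natCard_eq_filter (p : Fin n → Prop) [DecidablePred p] :
    Nat.card {i : Fin n // p i} = #(univ.filter p) := by
  rw [Nat.card_eq_fintype_card, Fintype.card_subtype]

/-- column of a point -/
noncomputable def col (τ : Equiv.Perm (Fin n)) (i : Fin n) : ℕ :=
  Nat.card {m : Fin n // IsLRMin τ m ∧ m < i}

/-- row of a point -/
noncomputable def row (τ : Equiv.Perm (Fin n)) (i : Fin n) : ℕ :=
  Nat.card {m : Fin n // IsLRMin τ m ∧ τ i < τ m} + 1

lemma col_filter (τ : Equiv.Perm (Fin n)) (i : Fin n) :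
    col τ i = #(univ.filter fun m => IsLRMin τ m ∧ m < i) :=
  natCard_eq_filter _

lemma row_filter (τ : Equiv.Perm (Fin n)) (i : Fin n) :
    row τ i = #(univ.filter fun m => IsLRMin τ m ∧ τ i < τ m) + 1 :=
  congrArg (· + 1) (natCard_eq_filter _)

lemma enc_eq (τ : Equiv.Perm (Fin n)) (r c : ℕ) :
    StaircaseEnc τ r c =
      #(univ.filter fun i => ¬ IsLRMin τ i ∧ row τ i = r ∧ col τ i = c) :=
  natCard_eq_filter fun i => ¬ IsLRMin τ i ∧ row τ i = r ∧ col τ i = c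

variable {τ : Equiv.Perm (Fin n)} {i j m : Fin n}

lemma min_anti (hj : IsLRMin τ j) (h : i < j) : τ j < τ i := hj i h

lemma val_ne (h : i ≠ j) : τ i ≠ τ j := fun he => h (τ.injective he)

lemma exists_argmin (h : ¬ IsLRMin τ i) :
    ∃ m, m < i ∧ IsLRMin τ m ∧ τ m < τ i ∧ ∀ l, l < i → τ m ≤ τ l := by
  rw [IsLRMin] at h
  push_neg at h
  obtain ⟨j, hji, hj⟩ := h
  obtain ⟨m, hm, hmin⟩ := (Finset.Iio i).exists_min_image τ ⟨j, Finset.mem_Iio.mpr hji⟩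
  rw [Finset.mem_Iio] at hm
  have hmle : ∀ l, l < i → τ m ≤ τ l := fun l hl => hmin l (Finset.mem_Iio.mpr hl)
  have hmi : τ m < τ i := lt_of_le_of_lt (hmle j hji) (lt_of_le_of_ne hj (val_ne hji.ne))
  refine ⟨m, hm, fun l hl => ?_, hmi, hmle⟩
  exact lt_of_le_of_ne (hmle l (hl.trans hm)) (val_ne (ne_of_gt hl))

lemma row_le_row (h : τ i < τ j) : row τ j ≤ row τ i := by
  rw [row_filter, row_filter]
  apply Nat.add_le_add_right
  apply card_le_card
  intro m hm
  simp only [mem_filter, mem_univ, true_and] at *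
  exact ⟨hm.1, h.trans hm.2⟩

lemma lt_of_row_lt (h : row τ i < row τ j) : τ j < τ i := by
  rcases lt_trichotomy (τ i) (τ j) with h' | h' | h'
  · exact absurd (row_le_row h') (by omega)
  · exact absurd (τ.injective h') (by rintro rfl; omega)
  · exact h'

lemma col_mono (h : i ≤ j) : col τ i ≤ col τ j := by
  rw [col_filter, col_filter]
  apply card_le_card
  intro m hm
  simp only [mem_filter, mem_univ, true_and] at *
  exact ⟨hm.1, lt_of_lt_of_le hm.2 h⟩

lemma col_lt_col (hm : IsLRMin τ m) (h1 : i ≤ m) (h2 : m < j) : col τ i < col τ j := by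
  have hsub : insert m (univ.filter fun m' => IsLRMin τ m' ∧ m' < i) ⊆
      univ.filter fun m' => IsLRMin τ m' ∧ m' < j := by
    intro x hx
    rcases Finset.mem_insert.mp hx with rfl | hx
    · simp [hm, h2]
    · simp only [mem_filter, mem_univ, true_and] at *
      exact ⟨hx.1, hx.2.trans (lt_of_le_of_lt (le_refl i) (lt_of_le_of_lt h1 h2))⟩
  have hnm : m ∉ (univ.filter fun m' => IsLRMin τ m' ∧ m' < i) := by
    simp only [mem_filter, mem_univ, true_and, not_and]
    intro _
    exact not_lt.mpr h1
  rw [col_filter, col_filter]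
  calc #(univ.filter fun m' => IsLRMin τ m' ∧ m' < i)
      < #(univ.filter fun m' => IsLRMin τ m' ∧ m' < i) + 1 := Nat.lt_succ_self _
    _ = #(insert m (univ.filter fun m' => IsLRMin τ m' ∧ m' < i)) :=
        (Finset.card_insert_of_notMem hnm).symm
    _ ≤ _ := card_le_card hsub

lemma avoid_elim (hτ : Avoids132 τ) {a b c : Fin n} (hab : a < b) (hbc : b < c)
    (h1 : τ a < τ c) (h2 : τ c < τ b) : False :=
  hτ ⟨a, b, c, hab, hbc, h1, h2⟩

/-- points in the same column appear in increasing value order -/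
lemma col_increasing (hτ : Avoids132 τ) (_hi : ¬ IsLRMin τ i) (hj : ¬ IsLRMin τ j)
    (hij : i < j) (hc : col τ i = col τ j) : τ i < τ j := by
  by_contra h
  have h' : τ j < τ i := lt_of_le_of_ne (not_lt.mp h) (val_ne hij.ne')
  obtain ⟨m, hmj, hmmin, hmlt, -⟩ := exists_argmin hj
  rcases lt_or_ge m i with hmi | him
  · exact avoid_elim hτ hmi hij hmlt h'
  · exact absurd (col_lt_col hmmin him hmj) (by omega)

/-- points in the same row appear in increasing value order -/
lemma row_increasing (hτ : Avoids132 τ) (hi : ¬ IsLRMin τ i) (hj : ¬ IsLRMin τ j)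
    (hij : i < j) (hr : row τ i = row τ j) : τ i < τ j := by
  by_contra h
  have h' : τ j < τ i := lt_of_le_of_ne (not_lt.mp h) (val_ne hij.ne')
  obtain ⟨m, hmi, hmmin, hmlt, -⟩ := exists_argmin hi
  rcases lt_or_ge (τ m) (τ j) with hmj | hjm
  · exact avoid_elim hτ hmi hij hmj h'
  · have hjm' : τ j < τ m := lt_of_le_of_ne hjm (val_ne (by rintro rfl; exact hj hmmin)).symm
    have hsub : insert m (univ.filter fun m' => IsLRMin τ m' ∧ τ i < τ m') ⊆
        univ.filter fun m' => IsLRMin τ m' ∧ τ j < τ m' := by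
      intro x hx
      rcases Finset.mem_insert.mp hx with rfl | hx
      · simp [hmmin, hjm']
      · simp only [mem_filter, mem_univ, true_and] at *
        exact ⟨hx.1, h'.trans hx.2⟩
    have hnm : m ∉ univ.filter fun m' => IsLRMin τ m' ∧ τ i < τ m' := by
      simp only [mem_filter, mem_univ, true_and, not_and, not_lt]
      exact fun _ => hmlt.le
    have : row τ i + 1 ≤ row τ j := by
      rw [row_filter, row_filter]
      have := card_le_card hsub
      rw [Finset.card_insert_of_notMem hnm] at this
      omega
    omega

/-- a minimum `m` is above a non-minimum `j` in value iff `col m + 1 < row j` -/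
lemma min_gt_iff (hm : IsLRMin τ m) (hj : ¬ IsLRMin τ j) :
    τ j < τ m ↔ col τ m + 1 < row τ j := by
  have hne : m ≠ j := by rintro rfl; exact hj hm
  constructor
  · intro h
    have hsub : insert m (univ.filter fun m' => IsLRMin τ m' ∧ m' < m) ⊆
        univ.filter fun m' => IsLRMin τ m' ∧ τ j < τ m' := by
      intro x hx
      rcases Finset.mem_insert.mp hx with rfl | hx
      · simp [hm, h]
      · simp only [mem_filter, mem_univ, true_and] at *
        exact ⟨hx.1, h.trans (min_anti hm hx.2)⟩
    have hnm : m ∉ univ.filter fun m' => IsLRMin τ m' ∧ m' < m := by simp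
    have := card_le_card hsub
    rw [Finset.card_insert_of_notMem hnm] at this
    rw [row_filter, col_filter]
    omega
  · intro h
    by_contra h'
    have h'' : τ m < τ j := lt_of_le_of_ne (not_lt.mp h') (val_ne hne)
    have hsub : (univ.filter fun m' => IsLRMin τ m' ∧ τ j < τ m') ⊆
        univ.filter fun m' => IsLRMin τ m' ∧ m' < m := by
      intro x hx
      simp only [mem_filter, mem_univ, true_and] at *
      refine ⟨hx.1, ?_⟩
      by_contra hxm
      rcases eq_or_lt_of_le (not_lt.mp hxm) with rfl | hlt
      · exact absurd (h''.trans hx.2) (lt_irrefl _)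
      · exact absurd (h''.trans hx.2) (not_lt.mpr (min_anti hx.1 hlt).le)
    have := card_le_card hsub
    rw [row_filter, col_filter] at h
    omega


/-- the count of non-minima in columns `≤ c` is an encoding sum -/
lemma D_eq_sum (τ : Equiv.Perm (Fin n)) (c : ℕ) :
    #(univ.filter fun j => ¬ IsLRMin τ j ∧ col τ j ≤ c) =
      ∑ p ∈ Finset.range (n + 2) ×ˢ Finset.range (c + 1), StaircaseEnc τ p.1 p.2 := by
  rw [Finset.card_eq_sum_card_fiberwise (f := fun j => (row τ j, col τ j))
    (t := Finset.range (n + 2) ×ˢ Finset.range (c + 1)) ?_]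
  · apply Finset.sum_congr rfl
    intro p hp
    rw [Finset.mem_product, Finset.mem_range, Finset.mem_range] at hp
    rw [enc_eq, Finset.filter_filter]
    congr 1
    apply Finset.filter_congr
    intro j _
    constructor
    · rintro ⟨⟨h1, -⟩, h2⟩
      rw [Prod.ext_iff] at h2
      exact ⟨h1, h2.1, h2.2⟩
    · rintro ⟨h1, h2, h3⟩
      exact ⟨⟨h1, by omega⟩, by rw [Prod.ext_iff]; exact ⟨h2, h3⟩⟩
  · intro j hj
    rw [Finset.mem_coe, mem_filter] at hj
    rw [Finset.mem_coe, Finset.mem_product]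
    dsimp only
    rw [Finset.mem_range, Finset.mem_range]
    have hr : row τ j ≤ n + 1 := by
      rw [row_filter]
      have h1 := Finset.card_filter_le (univ : Finset (Fin n))
        (fun m => IsLRMin τ m ∧ τ j < τ m)
      rw [Finset.card_univ, Fintype.card_fin] at h1
      omega
    exact ⟨by omega, by omega⟩

lemma pos_split (τ : Equiv.Perm (Fin n)) (i : Fin n) :
    (i : ℕ) = col τ i + #(univ.filter fun j => ¬ IsLRMin τ j ∧ j < i) := by
  have hIio : #(univ.filter fun j => j < i) = (i : ℕ) := by
    rw [show (univ.filter fun j => j < i) = Finset.Iio i by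
      ext x; simp [Finset.mem_Iio]]
    exact Fin.card_Iio i
  have hsp := Finset.card_filter_add_card_filter_not
    (s := univ.filter fun j => j < i) (p := IsLRMin τ)
  rw [Finset.filter_filter, Finset.filter_filter] at hsp
  rw [col_filter,
    show (univ.filter fun m => IsLRMin τ m ∧ m < i) =
      (univ.filter fun j => j < i ∧ IsLRMin τ j) from
      Finset.filter_congr fun x _ => and_comm,
    show (univ.filter fun j => ¬ IsLRMin τ j ∧ j < i) =
      (univ.filter fun j => j < i ∧ ¬ IsLRMin τ j) from
      Finset.filter_congr fun x _ => and_comm]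
  omega

lemma min_iff_crit (τ : Equiv.Perm (Fin n)) (i : Fin n) :
    IsLRMin τ i ↔
      (i : ℕ) = col τ i +
        #(univ.filter fun j => ¬ IsLRMin τ j ∧ col τ j ≤ col τ i) := by
  constructor
  · intro hi
    rw [pos_split τ i]
    congr 2
    apply Finset.filter_congr
    intro j _
    constructor
    · rintro ⟨h1, h2⟩; exact ⟨h1, col_mono h2.le⟩
    · rintro ⟨h1, h2⟩
      refine ⟨h1, ?_⟩
      by_contra hj
      rcases eq_or_lt_of_le (not_lt.mp hj) with rfl | hlt
      · exact h1 hi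
      · exact absurd (col_lt_col hi (le_refl i) hlt) (by omega)
  · intro h
    by_contra hi
    have hmem : i ∈ univ.filter fun j => ¬ IsLRMin τ j ∧ col τ j ≤ col τ i := by
      simp [hi]
    have hsub : (univ.filter fun j => ¬ IsLRMin τ j ∧ j < i) ⊆
        univ.filter fun j => ¬ IsLRMin τ j ∧ col τ j ≤ col τ i := by
      intro j hj
      simp only [mem_filter, mem_univ, true_and] at *
      exact ⟨hj.1, col_mono hj.2.le⟩
    have hss : (univ.filter fun j => ¬ IsLRMin τ j ∧ j < i) ⊂
        univ.filter fun j => ¬ IsLRMin τ j ∧ col τ j ≤ col τ i := by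
      refine ⟨hsub, fun h' => ?_⟩
      have := h' hmem
      simp at this
    have hc := Finset.card_lt_card hss
    have hp := pos_split τ i
    omega

lemma min_eq_min {π σ : Equiv.Perm (Fin n)}
    (henc : ∀ r c : ℕ, StaircaseEnc π r c = StaircaseEnc σ r c) (i : Fin n) :
    IsLRMin π i ↔ IsLRMin σ i := by
  have hD : ∀ c, #(univ.filter fun j => ¬ IsLRMin π j ∧ col π j ≤ c) =
      #(univ.filter fun j => ¬ IsLRMin σ j ∧ col σ j ≤ c) := fun c => by
    rw [D_eq_sum, D_eq_sum]
    exact Finset.sum_congr rfl fun p _ => henc p.1 p.2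
  suffices H : ∀ t : ℕ, ∀ i : Fin n, (i : ℕ) = t → (IsLRMin π i ↔ IsLRMin σ i) by
    exact H i i rfl
  intro t
  induction t using Nat.strong_induction_on with
  | _ t IH =>
    intro i hit
    have colEq : col π i = col σ i := by
      rw [col_filter, col_filter]
      congr 1
      apply Finset.filter_congr
      intro j _
      have : ∀ (hj : j < i), (IsLRMin π j ↔ IsLRMin σ j) := fun hj =>
        IH (j : ℕ) (by rw [← hit]; exact hj) j rfl
      constructor
      · rintro ⟨h1, h2⟩; exact ⟨(this h2).mp h1, h2⟩
      · rintro ⟨h1, h2⟩; exact ⟨(this h2).mpr h1, h2⟩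
    rw [min_iff_crit π i, min_iff_crit σ i, colEq, hD (col σ i)]


lemma band_sum (τ : Equiv.Perm (Fin n)) (c r : ℕ) :
    #(univ.filter fun j => ¬ IsLRMin τ j ∧ col τ j = c ∧ row τ j < r) =
      ∑ r' ∈ Finset.range r, StaircaseEnc τ r' c := by
  rw [Finset.card_eq_sum_card_fiberwise (f := fun j => row τ j)
    (t := Finset.range r) ?_]
  · apply Finset.sum_congr rfl
    intro r' hr'
    rw [Finset.mem_range] at hr'
    rw [enc_eq, Finset.filter_filter]
    congr 1
    apply Finset.filter_congr
    intro j _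
    constructor
    · rintro ⟨⟨h1, h2, -⟩, h3⟩
      exact ⟨h1, h3, h2⟩
    · rintro ⟨h1, h2, h3⟩
      exact ⟨⟨h1, h3, by omega⟩, h2⟩
  · intro j hj
    rw [Finset.mem_coe, mem_filter] at hj
    rw [Finset.mem_coe, Finset.mem_range]
    exact hj.2.2.2

/-- the number of later points in the same column sandwiches the row -/
lemma row_sandwich (hτ : Avoids132 τ) (hi : ¬ IsLRMin τ i) :
    ∑ r' ∈ Finset.range (row τ i), StaircaseEnc τ r' (col τ i) ≤
      #(univ.filter fun j => ¬ IsLRMin τ j ∧ col τ j = col τ i ∧ i < j) ∧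
    #(univ.filter fun j => ¬ IsLRMin τ j ∧ col τ j = col τ i ∧ i < j) <
      ∑ r' ∈ Finset.range (row τ i + 1), StaircaseEnc τ r' (col τ i) := by
  constructor
  · rw [← band_sum]
    apply card_le_card
    intro j hj
    simp only [mem_filter, mem_univ, true_and] at *
    obtain ⟨h1, h2, h3⟩ := hj
    refine ⟨h1, h2, ?_⟩
    have hv : τ i < τ j := lt_of_row_lt h3
    by_contra hij
    rcases eq_or_lt_of_le (not_lt.mp hij) with rfl | hlt
    · omega
    · exact absurd (col_increasing hτ h1 hi hlt h2) (not_lt.mpr hv.le)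
  · rw [← band_sum]
    apply Finset.card_lt_card
    constructor
    · intro j hj
      simp only [mem_filter, mem_univ, true_and] at *
      obtain ⟨h1, h2, h3⟩ := hj
      have hv : τ i < τ j := col_increasing hτ hi h1 h3 h2.symm
      exact ⟨h1, h2, by have := row_le_row hv; omega⟩
    · intro hsub
      have : i ∈ univ.filter fun j => ¬ IsLRMin τ j ∧ col τ j = col τ i ∧ i < j :=
        hsub (by simp [hi])
      simp at this

lemma row_eq_row {π σ : Equiv.Perm (Fin n)} (hπ : Avoids132 π) (hσ : Avoids132 σ)
    (henc : ∀ r c : ℕ, StaircaseEnc π r c = StaircaseEnc σ r c)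
    (i : Fin n) (hi : ¬ IsLRMin π i) : row π i = row σ i := by
  have hmin : ∀ j, IsLRMin π j ↔ IsLRMin σ j := min_eq_min henc
  have hcol : ∀ j, col π j = col σ j := fun j => by
    rw [col_filter, col_filter]
    congr 1
    apply Finset.filter_congr
    intro m _
    rw [hmin m]
  have hi' : ¬ IsLRMin σ i := fun h => hi ((hmin i).mpr h)
  have hq : #(univ.filter fun j => ¬ IsLRMin π j ∧ col π j = col π i ∧ i < j) =
      #(univ.filter fun j => ¬ IsLRMin σ j ∧ col σ j = col σ i ∧ i < j) := by
    congr 1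
    apply Finset.filter_congr
    intro j _
    rw [hmin j, hcol j, hcol i]
  have hSπ := row_sandwich hπ hi
  have hSσ := row_sandwich hσ hi'
  rw [← hq, ← hcol i] at hSσ
  have hSeq : ∀ r, ∑ r' ∈ Finset.range r, StaircaseEnc σ r' (col π i) =
      ∑ r' ∈ Finset.range r, StaircaseEnc π r' (col π i) :=
    fun r => Finset.sum_congr rfl fun r' _ => (henc r' (col π i)).symm
  rw [hSeq, hSeq] at hSσ
  by_contra hne
  rcases lt_or_gt_of_ne hne with hlt | hlt
  · have : ∑ r' ∈ Finset.range (row π i + 1), StaircaseEnc π r' (col π i) ≤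
        ∑ r' ∈ Finset.range (row σ i), StaircaseEnc π r' (col π i) := by
      apply Finset.sum_le_sum_of_subset
      exact Finset.range_subset_range.mpr (by omega)
    omega
  · have : ∑ r' ∈ Finset.range (row σ i + 1), StaircaseEnc π r' (col π i) ≤
        ∑ r' ∈ Finset.range (row π i), StaircaseEnc π r' (col π i) := by
      apply Finset.sum_le_sum_of_subset
      exact Finset.range_subset_range.mpr (by omega)
    omega

lemma min_lt_iff (hi : IsLRMin τ i) (hj : IsLRMin τ j) (hne : i ≠ j) :
    τ i < τ j ↔ j < i := by
  constructor
  · intro h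
    rcases lt_or_gt_of_ne hne with hlt | hlt
    · exact absurd (min_anti hj hlt) (not_lt.mpr h.le)
    · exact hlt
  · exact min_anti hi

lemma nonmin_lt_iff (hτ : Avoids132 τ) (hi : ¬ IsLRMin τ i) (hj : ¬ IsLRMin τ j)
    (hne : i ≠ j) :
    τ i < τ j ↔ (row τ j < row τ i ∨ (row τ i = row τ j ∧ i < j)) := by
  constructor
  · intro h
    rcases eq_or_lt_of_le (row_le_row h) with he | hlt
    · refine Or.inr ⟨he.symm, ?_⟩
      rcases lt_or_gt_of_ne hne with hlt' | hlt'
      · exact hlt'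
      · exact absurd (row_increasing hτ hj hi hlt' he) (not_lt.mpr h.le)
    · exact Or.inl hlt
  · rintro (h | ⟨he, hij⟩)
    · exact lt_of_row_lt h
    · exact row_increasing hτ hi hj hij he

lemma card_lt_val (τ : Equiv.Perm (Fin n)) (i : Fin n) :
    #(univ.filter fun j => τ j < τ i) = (τ i : ℕ) := by
  calc #(univ.filter fun j => τ j < τ i) = #(Finset.Iio (τ i)) := by
        apply Finset.card_bij (fun j _ => τ j)
        · intro a ha
          simp only [mem_filter] at ha
          exact Finset.mem_Iio.mpr ha.2
        · intro a _ b _ h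
          exact τ.injective h
        · intro x hx
          refine ⟨τ.symm x, ?_, by simp⟩
          simp only [mem_filter, mem_univ, true_and, Equiv.apply_symm_apply]
          exact Finset.mem_Iio.mp hx
    _ = (τ i : ℕ) := Fin.card_Iio _

end Staircase

/-- The staircase encoding is injective on 132-avoiding permutations: two
132-avoiding permutations of the same length with the same number of
left-to-right minima and the same number of points in each box of the
staircase grid are equal. -/
theorem staircase_encoding_injective {n : ℕ} (π σ : Equiv.Perm (Fin n))
    (hπ : Avoids132 π) (hσ : Avoids132 σ)
    (hlrm : Nat.card {i : Fin n // IsLRMin π i} =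
      Nat.card {i : Fin n // IsLRMin σ i})
    (henc : ∀ r c : ℕ, StaircaseEnc π r c = StaircaseEnc σ r c) :
    π = σ := by
  clear hlrm
  open Staircase in
  have hmin : ∀ j, IsLRMin π j ↔ IsLRMin σ j := Staircase.min_eq_min henc
  have hcol : ∀ j, Staircase.col π j = Staircase.col σ j := fun j => by
    rw [Staircase.col_filter, Staircase.col_filter]
    congr 1
    exact Finset.filter_congr fun m _ => by rw [hmin m]
  have hrow : ∀ j, ¬ IsLRMin π j → Staircase.row π j = Staircase.row σ j :=
    Staircase.row_eq_row hπ hσ henc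
  have hflip : ∀ (a b : Fin n), a ≠ b → (a < b ↔ ¬ b < a) := fun a b h =>
    ⟨fun hl hr => absurd (hl.trans hr) (lt_irrefl _),
     fun hr => (lt_or_gt_of_ne h).resolve_right hr⟩
  have horder : ∀ i j, π i < π j ↔ σ i < σ j := by
    intro i j
    rcases eq_or_ne i j with rfl | hne
    · simp
    by_cases hi : IsLRMin π i <;> by_cases hj : IsLRMin π j
    · rw [Staircase.min_lt_iff hi hj hne,
        Staircase.min_lt_iff ((hmin i).mp hi) ((hmin j).mp hj) hne]
    · have h1 := Staircase.min_gt_iff hi hj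
      have h2 := Staircase.min_gt_iff ((hmin i).mp hi)
        (fun h => hj ((hmin j).mpr h))
      rw [hflip (π i) (π j) (Staircase.val_ne hne),
        hflip (σ i) (σ j) (Staircase.val_ne hne), h1, h2, hcol i, hrow j hj]
    · have h1 := Staircase.min_gt_iff hj hi
      have h2 := Staircase.min_gt_iff ((hmin j).mp hj)
        (fun h => hi ((hmin i).mpr h))
      rw [h1, h2, hcol j, hrow i hi]
    · rw [Staircase.nonmin_lt_iff hπ hi hj hne,
        Staircase.nonmin_lt_iff hσ (fun h => hi ((hmin i).mpr h))
          (fun h => hj ((hmin j).mpr h)) hne,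
        hrow i hi, hrow j hj]
  apply Equiv.ext
  intro i
  have h1 := Staircase.card_lt_val π i
  have h2 := Staircase.card_lt_val σ i
  have h3 : #(Finset.univ.filter fun j => π j < π i) =
      #(Finset.univ.filter fun j => σ j < σ i) := by
    congr 1
    exact Finset.filter_congr fun j _ => by rw [horder j i]
  exact Fin.val_injective (by omega)
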